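/- If f : [-1,1] → ℝ is convex and symmetric (f(x) = f(-x) for all x), then the function f⁺(d₁,d₂) = ((1+d₁d₂)/2)·f((d₁+d₂)/(1+d₁d₂)) + ((1-d₁d₂)/2)·f((d₁-d₂)/(1-d₁d₂)) is convex in d₁ for each fixed d₂ ∈ (-1,1). -/

import Mathlib

open Set

lemma persp_convex (f : ℝ → ℝ) (hf : ConvexOn ℝ (Icc (-1 : ℝ) 1) f)
    (c e : ℝ) (hpos : ∀ d ∈ Icc (-1:ℝ) 1, 0 < 1 + c * d)
    (harg : ∀ d ∈ Icc (-1:ℝ) 1, (d + e) / (1 + c * d) ∈ Icc (-1:ℝ) 1) :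
    ConvexOn ℝ (Icc (-1:ℝ) 1) (fun d => ((1 + c * d) / 2) * f ((d + e) / (1 + c * d))) := by
  refine ⟨convex_Icc _ _, fun x hx y hy a b ha hb hab => ?_⟩
  simp only [smul_eq_mul]
  have hx' := hpos x hx
  have hy' := hpos y hy
  have hxy : a • x + b • y ∈ Icc (-1:ℝ) 1 := (convex_Icc (-1:ℝ) 1) hx hy ha hb hab
  have hT' := hpos _ hxy
  simp only [smul_eq_mul] at hxy hT'
  set tx : ℝ := (1 + c * x) / 2 with htxdef
  set ty : ℝ := (1 + c * y) / 2 with htydef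
  have htx : 0 < tx := by positivity
  have hty : 0 < ty := by positivity
  set T : ℝ := a * tx + b * ty with hTdef
  have hTeq : T = (1 + c * (a * x + b * y)) / 2 := by
    rw [hTdef, htxdef, htydef]; linear_combination ((1:ℝ)/2) * hab
  have hT : 0 < T := by rw [hTeq]; positivity
  set lx : ℝ := a * tx / T with hlxdef
  set ly : ℝ := b * ty / T with hlydef
  have hlx : 0 ≤ lx := by positivity
  have hly : 0 ≤ ly := by positivity
  have hlsum : lx + ly = 1 := by
    rw [hlxdef, hlydef]; field_simp; exact hTdef.symm
  have hT0 : T ≠ 0 := ne_of_gt hT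
  have h1 : (1 + c * x) ≠ 0 := ne_of_gt hx'
  have h2 : (1 + c * y) ≠ 0 := ne_of_gt hy'
  have e1 : lx * ((x + e) / (1 + c * x)) = a * (x + e) / (2 * T) := by
    rw [hlxdef, htxdef]; field_simp
  have e2 : ly * ((y + e) / (1 + c * y)) = b * (y + e) / (2 * T) := by
    rw [hlydef, htydef]; field_simp
  have h2T : 1 + c * (a * x + b * y) = 2 * T := by rw [hTeq]; ring
  have hzeq : (a * x + b * y + e) / (1 + c * (a * x + b * y))
      = lx * ((x + e) / (1 + c * x)) + ly * ((y + e) / (1 + c * y)) := by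
    rw [e1, e2, h2T, ← add_div]
    congr 1
    linear_combination (-e) * hab
  have key := hf.2 (harg x hx) (harg y hy) hlx hly hlsum
  simp only [smul_eq_mul] at key
  calc ((1 + c * (a * x + b * y)) / 2) * f ((a * x + b * y + e) / (1 + c * (a * x + b * y)))
      = T * f (lx * ((x + e) / (1 + c * x)) + ly * ((y + e) / (1 + c * y))) := by
        rw [hzeq, hTeq]
    _ ≤ T * (lx * f ((x + e) / (1 + c * x)) + ly * f ((y + e) / (1 + c * y))) := by
        exact mul_le_mul_of_nonneg_left key (le_of_lt hT)
    _ = a * (tx * f ((x + e) / (1 + c * x))) + b * (ty * f ((y + e) / (1 + c * y))) := by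
        rw [hlxdef, hlydef]; field_simp
    _ = a * ((1 + c * x) / 2 * f ((x + e) / (1 + c * x)))
        + b * ((1 + c * y) / 2 * f ((y + e) / (1 + c * y))) := by
        rw [htxdef, htydef]

theorem fplus_convex_in_d1
    (f : ℝ → ℝ)
    (hconv : ConvexOn ℝ (Icc (-1 : ℝ) 1) f)
    (hsym : ∀ x ∈ Icc (-1 : ℝ) 1, f x = f (-x))
    (d₂ : ℝ) (hd₂ : d₂ ∈ Ioo (-1 : ℝ) 1) :
    ConvexOn ℝ (Icc (-1 : ℝ) 1)
      (fun d₁ => ((1 + d₁ * d₂) / 2) * f ((d₁ + d₂) / (1 + d₁ * d₂))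
        + ((1 - d₁ * d₂) / 2) * f ((d₁ - d₂) / (1 - d₁ * d₂))) := by
  obtain ⟨h2l, h2r⟩ := hd₂
  have hpos1 : ∀ d ∈ Icc (-1:ℝ) 1, 0 < 1 + d₂ * d := by
    intro d hd; obtain ⟨hl, hr⟩ := hd
    nlinarith [mul_nonneg (by linarith : (0:ℝ) ≤ 1 + d) (by linarith : (0:ℝ) ≤ 1 + d₂),
      mul_nonneg (by linarith : (0:ℝ) ≤ 1 - d) (by linarith : (0:ℝ) ≤ 1 - d₂)]
  have hpos2 : ∀ d ∈ Icc (-1:ℝ) 1, 0 < 1 + (-d₂) * d := by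
    intro d hd; obtain ⟨hl, hr⟩ := hd
    nlinarith [mul_nonneg (by linarith : (0:ℝ) ≤ 1 + d) (by linarith : (0:ℝ) ≤ 1 - d₂),
      mul_nonneg (by linarith : (0:ℝ) ≤ 1 - d) (by linarith : (0:ℝ) ≤ 1 + d₂)]
  have harg1 : ∀ d ∈ Icc (-1:ℝ) 1, (d + d₂) / (1 + d₂ * d) ∈ Icc (-1:ℝ) 1 := by
    intro d hd; obtain ⟨hl, hr⟩ := hd
    have hp := hpos1 d ⟨hl, hr⟩
    rw [mem_Icc]
    constructor
    · rw [le_div_iff₀ hp]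
      nlinarith [mul_nonneg (by linarith : (0:ℝ) ≤ 1 + d) (by linarith : (0:ℝ) ≤ 1 + d₂)]
    · rw [div_le_one hp]
      nlinarith [mul_nonneg (by linarith : (0:ℝ) ≤ 1 - d) (by linarith : (0:ℝ) ≤ 1 - d₂)]
  have harg2 : ∀ d ∈ Icc (-1:ℝ) 1, (d + (-d₂)) / (1 + (-d₂) * d) ∈ Icc (-1:ℝ) 1 := by
    intro d hd; obtain ⟨hl, hr⟩ := hd
    have hp := hpos2 d ⟨hl, hr⟩
    rw [mem_Icc]
    constructor
    · rw [le_div_iff₀ hp]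
      nlinarith [mul_nonneg (by linarith : (0:ℝ) ≤ 1 + d) (by linarith : (0:ℝ) ≤ 1 - d₂)]
    · rw [div_le_one hp]
      nlinarith [mul_nonneg (by linarith : (0:ℝ) ≤ 1 - d) (by linarith : (0:ℝ) ≤ 1 + d₂)]
  have h1 := persp_convex f hconv d₂ d₂ hpos1 harg1
  have h2 := persp_convex f hconv (-d₂) (-d₂) hpos2 harg2
  have hfun : (fun d₁ => ((1 + d₁ * d₂) / 2) * f ((d₁ + d₂) / (1 + d₁ * d₂))
        + ((1 - d₁ * d₂) / 2) * f ((d₁ - d₂) / (1 - d₁ * d₂)))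
      = ((fun d => (1 + d₂ * d) / 2 * f ((d + d₂) / (1 + d₂ * d)))
        + fun d => (1 + -d₂ * d) / 2 * f ((d + -d₂) / (1 + -d₂ * d))) := by
    funext d
    simp only [Pi.add_apply]
    have e1 : 1 + d₂ * d = 1 + d * d₂ := by ring
    have e2 : 1 + -d₂ * d = 1 - d * d₂ := by ring
    have e3 : d + -d₂ = d - d₂ := by ring
    rw [e1, e2, e3]
  rw [hfun]
  exact h1.add h2
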